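/- arXiv:2503.01454 — 4 statements merged into one kernel-verified Lean document; each statement's English description precedes it below -/
import Mathlib

section
/- For λ = (λ₁,…,λₙ) in the Gårding cone Γ_k (i.e. σ_i(λ) > 0 for all 1 ≤ i ≤ k), the partial derivative σ_{k-1}(λ|i) = ∂σ_k/∂λ_i is strictly positive for every index 1 ≤ i ≤ n. -/
open Polynomial

namespace GardingAux

/-- esymm at 0 is 1. -/
lemma esymm_zero' (s : Multiset ℝ) : s.esymm 0 = 1 := by
  simp [Multiset.esymm, Multiset.powersetCard_zero_left]

/-- esymm vanishes beyond the cardinality. -/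
lemma esymm_of_card_lt {s : Multiset ℝ} {k : ℕ} (h : Multiset.card s < k) :
    s.esymm k = 0 := by
  have : s.powersetCard k = 0 := by
    rw [Multiset.powersetCard_eq_empty]
    exact h
  simp [Multiset.esymm, this]

/-- Recurrence for esymm under cons. -/
lemma esymm_cons (a : ℝ) (s : Multiset ℝ) (k : ℕ) :
    (a ::ₘ s).esymm (k + 1) = s.esymm (k + 1) + a * s.esymm k := by
  rw [Multiset.esymm, Multiset.powersetCard_cons, Multiset.map_add, Multiset.sum_add,
    Multiset.map_map]
  congr 1
  rw [Multiset.esymm, ← Multiset.sum_map_mul_left]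
  congr 1
  apply Multiset.map_congr rfl
  intro x _
  simp [Multiset.prod_cons]


/-- Newton-type inequality for a multiset of reals at the top degrees. -/
lemma newton_top : ∀ (K : ℕ) (s : Multiset ℝ), Multiset.card s = K + 2 →
    2 * s.esymm (K + 2) * s.esymm K ≤ s.esymm (K + 1) ^ 2 := by
  intro K
  induction K with
  | zero =>
    intro s hs
    obtain ⟨a, ha⟩ := Multiset.card_pos_iff_exists_mem.mp (by rw [hs]; omega)
    obtain ⟨t, rfl⟩ := Multiset.exists_cons_of_mem ha
    have hct : Multiset.card t = 1 := by simpa using hs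
    obtain ⟨b, hb⟩ := Multiset.card_pos_iff_exists_mem.mp (by rw [hct]; omega)
    obtain ⟨u, rfl⟩ := Multiset.exists_cons_of_mem hb
    have hu : u = (0 : Multiset ℝ) := Multiset.card_eq_zero.mp (by simpa using hct)
    subst hu
    simp only [zero_add]
    have h0 : (a ::ₘ b ::ₘ (0:Multiset ℝ)).esymm 0 = 1 := esymm_zero' _
    have hb1 : (b ::ₘ (0:Multiset ℝ)).esymm 1 = b := by
      rw [show (1:ℕ) = 0 + 1 from rfl, esymm_cons, esymm_zero']
      simp [esymm_of_card_lt (show Multiset.card (0:Multiset ℝ) < 1 by simp)]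
    have h1 : (a ::ₘ b ::ₘ (0:Multiset ℝ)).esymm 1 = a + b := by
      rw [show (1:ℕ) = 0 + 1 from rfl, esymm_cons, esymm_zero', hb1]
      simp; ring
    have h2 : (a ::ₘ b ::ₘ (0:Multiset ℝ)).esymm 2 = a * b := by
      rw [show (2:ℕ) = 1 + 1 from rfl, esymm_cons, hb1]
      rw [esymm_of_card_lt (by simp)]
      ring
    rw [h0, h1, h2]
    nlinarith [sq_nonneg (a - b)]
  | succ K ih =>
    intro s hs
    obtain ⟨a, ha⟩ := Multiset.card_pos_iff_exists_mem.mp (by rw [hs]; omega)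
    obtain ⟨t, rfl⟩ := Multiset.exists_cons_of_mem ha
    have hct : Multiset.card t = K + 2 := by simp at hs; omega
    have IH := ih t hct
    set P := t.esymm (K + 2) with hP
    set Q := t.esymm (K + 1) with hQ
    set R := t.esymm K with hR
    have h3 : t.esymm (K + 3) = 0 := esymm_of_card_lt (by omega)
    have ea : (a ::ₘ t).esymm (K + 3) = a * P := by rw [esymm_cons, h3]; ring
    have eb : (a ::ₘ t).esymm (K + 2) = P + a * Q := esymm_cons a t (K+1)
    have ec : (a ::ₘ t).esymm (K + 1) = Q + a * R := esymm_cons a t K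
    rw [ea, eb, ec]
    nlinarith [sq_nonneg P, sq_nonneg a, mul_nonneg (sq_nonneg a) (sub_nonneg.2 IH)]

/-- crux: if σ_K > 0 and σ_{K+1} = 0 then σ_{K+2} ≤ 0 (Newton for arbitrary reals,
via differentiating the real-rooted polynomial ∏ (X + xᵢ)). -/
lemma descFactorial_pos' {n k : ℕ} (h : k ≤ n) : 0 < n.descFactorial k :=
  Nat.pos_of_ne_zero (fun h0 => absurd (Nat.descFactorial_eq_zero_iff_lt.mp h0) (by omega))

/-- crux: if σ_K > 0 and σ_{K+1} = 0 then σ_{K+2} ≤ 0 (Newton for arbitrary reals,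
via differentiating the real-rooted polynomial ∏ (X + xᵢ)). -/
lemma crux (x : Multiset ℝ) (K : ℕ) (h2 : 0 < x.esymm K) (h1 : x.esymm (K + 1) = 0) :
    x.esymm (K + 2) ≤ 0 := by
  by_cases hcard : Multiset.card x < K + 2
  · rw [esymm_of_card_lt hcard]
  push_neg at hcard
  set m := Multiset.card x with hm
  set Q : ℝ[X] := (x.map (fun a => X + C a)).prod with hQdef
  have hmonic : Q.Monic := by
    apply monic_multiset_prod_of_monic
    intro a _
    exact monic_X_add_C a
  have hdegQ : Q.natDegree = m := by
    rw [hQdef, natDegree_multiset_prod_of_monic]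
    · rw [Multiset.map_map]
      have : ∀ a ∈ x, (Polynomial.natDegree ∘ fun a => X + C a) a = 1 := by
        intro a _; simp [natDegree_X_add_C]
      rw [Multiset.map_congr rfl this, Multiset.map_const', Multiset.sum_replicate]
      simp [hm]
    · intro f hf
      obtain ⟨a, _, rfl⟩ := Multiset.mem_map.mp hf
      exact monic_X_add_C a
  have hQcoeff : ∀ j, j ≤ m → Q.coeff (m - j) = x.esymm j := by
    intro j hj
    rw [hQdef, Multiset.prod_X_add_C_coeff x (Nat.sub_le m j)]
    congr 1
    omega
  have hQroots : Multiset.card Q.roots = m := by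
    have hQ2 : Q = ((x.map Neg.neg).map (fun a => X - C a)).prod := by
      rw [hQdef, Multiset.map_map]
      apply congrArg
      apply Multiset.map_congr rfl
      intro a _
      simp [sub_neg_eq_add]
    rw [hQ2, roots_multiset_prod_X_sub_C]
    simp [hm]
  -- iterated derivatives stay real-rooted
  have key : ∀ i, i ≤ m - (K + 2) →
      (derivative^[i] Q).natDegree = m - i ∧
      Multiset.card (derivative^[i] Q).roots = m - i := by
    intro i
    induction i with
    | zero => intro _; simpa [hdegQ] using hQroots
    | succ i ih =>
      intro hi
      obtain ⟨hd, hr⟩ := ih (by omega)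
      have h1' : (derivative (derivative^[i] Q)).natDegree ≤ m - i - 1 := by
        have := natDegree_derivative_le (derivative^[i] Q)
        omega
      have h2' : Multiset.card (derivative (derivative^[i] Q)).roots ≥ m - i - 1 := by
        have := (derivative^[i] Q).card_roots_le_derivative
        omega
      have h3' : Multiset.card (derivative (derivative^[i] Q)).roots ≤
          (derivative (derivative^[i] Q)).natDegree :=
        (derivative (derivative^[i] Q)).card_roots'
      rw [Function.iterate_succ_apply']
      constructor <;> omega
  obtain ⟨hdegD, hrootsD⟩ := key (m - (K + 2)) le_rfl
  set D := derivative^[m - (K + 2)] Q with hDdef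
  have hdegD' : D.natDegree = K + 2 := by rw [hdegD]; omega
  have hrootsD' : Multiset.card D.roots = K + 2 := by rw [hrootsD]; omega
  -- coefficients of D in terms of esymm of x
  have hDcoeff : ∀ j, j ≤ K + 2 →
      D.coeff j = ((m - (K + 2 - j)).descFactorial (m - (K + 2)) : ℝ) * x.esymm (K + 2 - j) := by
    intro j hj
    rw [hDdef, Polynomial.coeff_iterate_derivative]
    have e1 : j + (m - (K + 2)) = m - (K + 2 - j) := by omega
    rw [e1, hQcoeff (K + 2 - j) (by omega)]
    simp [nsmul_eq_mul]
  -- Vieta for D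
  have hVieta : ∀ j, j ≤ K + 2 →
      D.coeff j = D.leadingCoeff * (-1) ^ (K + 2 - j) * D.roots.esymm (K + 2 - j) := by
    intro j hj
    have := Polynomial.coeff_eq_esymm_roots_of_card (by rw [hrootsD', hdegD'])
      (k := j) (by omega : j ≤ D.natDegree)
    rwa [hdegD'] at this
  have hL : D.leadingCoeff = (m.descFactorial (m - (K + 2)) : ℝ) := by
    have h := hDcoeff (K + 2) le_rfl
    rw [Nat.sub_self, esymm_zero', mul_one] at h
    rw [Polynomial.leadingCoeff, hdegD', h]
    norm_num
  have hLpos : (0:ℝ) < (m.descFactorial (m - (K + 2)) : ℝ) := by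
    exact_mod_cast descFactorial_pos' (by omega)
  -- the negated roots
  set ν := D.roots.map Neg.neg with hν
  have hcardν : Multiset.card ν = K + 2 := by simp [hν, hrootsD']
  have hkey : ∀ i, i ≤ K + 2 →
      (m.descFactorial (m - (K + 2)) : ℝ) * ν.esymm i =
        ((m - i).descFactorial (m - (K + 2)) : ℝ) * x.esymm i := by
    intro i hi
    have h := hVieta (K + 2 - i) (by omega)
    rw [hDcoeff (K + 2 - i) (by omega), hL] at h
    have e3 : K + 2 - (K + 2 - i) = i := by omega
    rw [e3] at h
    rw [hν, Multiset.esymm_neg]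
    linear_combination -h
  have hν1 : ν.esymm (K + 1) = 0 := by
    have h := hkey (K + 1) (by omega)
    rw [h1, mul_zero] at h
    rcases mul_eq_zero.mp h with h | h
    · exact absurd h (ne_of_gt hLpos)
    · exact h
  have hνK : 0 < ν.esymm K := by
    have h := hkey K (by omega)
    have cpos : (0:ℝ) < ((m - K).descFactorial (m - (K + 2)) : ℝ) := by
      exact_mod_cast descFactorial_pos' (by omega)
    nlinarith
  have hnewton := newton_top K ν hcardν
  rw [hν1] at hnewton
  have hν2 : ν.esymm (K + 2) ≤ 0 := by nlinarith
  have h := hkey (K + 2) le_rfl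
  have cpos : (0:ℝ) < ((m - (K + 2)).descFactorial (m - (K + 2)) : ℝ) := by
    exact_mod_cast descFactorial_pos' le_rfl
  nlinarith


/-- Expansion of esymm of a shifted multiset. -/
lemma esymm_shift (s : Multiset ℝ) (t : ℝ) (j : ℕ) (hj : j ≤ Multiset.card s) :
    (s.map (· + t)).esymm j =
      ∑ i ∈ Finset.range (j + 1),
        ((i + (Multiset.card s - j)).choose (Multiset.card s - j) : ℝ) *
          s.esymm (j - i) * t ^ i := by
  set c := Multiset.card s with hc
  set Q : ℝ[X] := (s.map (fun a => X + C a)).prod with hQdef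
  have hmonic : Q.Monic := by
    apply monic_multiset_prod_of_monic
    intro a _
    exact monic_X_add_C a
  have hdegQ : Q.natDegree = c := by
    rw [hQdef, natDegree_multiset_prod_of_monic]
    · rw [Multiset.map_map]
      have : ∀ a ∈ s, (Polynomial.natDegree ∘ fun a => X + C a) a = 1 := by
        intro a _; simp [natDegree_X_add_C]
      rw [Multiset.map_congr rfl this, Multiset.map_const', Multiset.sum_replicate]
      simp [hc]
    · intro f hf
      obtain ⟨a, _, rfl⟩ := Multiset.mem_map.mp hf
      exact monic_X_add_C a
  have hQcoeff : ∀ i, i ≤ c → Q.coeff (c - i) = s.esymm i := by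
    intro i hi
    rw [hQdef, Multiset.prod_X_add_C_coeff s (Nat.sub_le c i)]
    congr 1
    omega
  -- the shifted product is Q ∘ (X + C t)
  have hcomp : ((s.map (· + t)).map (fun a => X + C a)).prod = Q.comp (X + C t) := by
    rw [hQdef, multiset_prod_comp, Multiset.map_map, Multiset.map_map]
    apply congrArg
    apply Multiset.map_congr rfl
    intro a _
    simp only [Function.comp_apply, add_comp, X_comp, C_comp]
    rw [C_add]
    ring
  have hcards : Multiset.card (s.map (· + t)) = c := by simp [hc]
  have lhs_eq : (s.map (· + t)).esymm j = (Q.comp (X + C t)).coeff (c - j) := by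
    rw [← hcomp, Multiset.prod_X_add_C_coeff _ (by rw [hcards]; exact Nat.sub_le c j)]
    rw [hcards]
    congr 1
    omega
  rw [lhs_eq, ← taylor_apply, taylor_coeff]
  have hdeg2 : (hasseDeriv (c - j) Q).natDegree < j + 1 := by
    have := natDegree_hasseDeriv_le Q (c - j)
    omega
  rw [eval_eq_sum_range' hdeg2 t]
  apply Finset.sum_congr rfl
  intro i hi
  rw [Finset.mem_range] at hi
  rw [hasseDeriv_coeff]
  have e1 : i + (c - j) = c - (j - i) := by omega
  rw [e1, hQcoeff (j - i) (by omega)]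


/-- Positivity of esymm is preserved under nonnegative shifts. -/
lemma esymm_shift_pos (s : Multiset ℝ) (t : ℝ) (ht : 0 ≤ t) (j : ℕ)
    (hj : j ≤ Multiset.card s) (h : ∀ m, m ≤ j → 0 ≤ s.esymm m) (hj' : 0 < s.esymm j) :
    0 < (s.map (· + t)).esymm j := by
  rw [esymm_shift s t j hj]
  apply Finset.sum_pos'
  · intro i hi
    rw [Finset.mem_range] at hi
    exact mul_nonneg (mul_nonneg (by positivity) (h _ (by omega))) (pow_nonneg ht i)
  · refine ⟨0, Finset.mem_range.mpr (by omega), ?_⟩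
    simpa using hj'

/-- Main lemma: if `a ::ₘ S` satisfies the Γ_{K+1} condition, then `esymm S K > 0`. -/
lemma main : ∀ (K : ℕ) (a : ℝ) (S : Multiset ℝ), K ≤ Multiset.card S →
    (∀ m, 1 ≤ m → m ≤ K + 1 → 0 < Multiset.esymm (a ::ₘ S) m) → 0 < S.esymm K := by
  intro K
  induction K using Nat.strong_induction_on with
  | _ K IH =>
  intro a S hcard hyp
  obtain _ | N := K
  · rw [esymm_zero']; norm_num
  · have hyp' : ∀ m, m ≤ N + 2 → 0 ≤ (a ::ₘ S).esymm m := by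
      intro m hm
      obtain _ | m := m
      · rw [esymm_zero']; norm_num
      · exact le_of_lt (hyp (m + 1) (by omega) (by omega))
    have hconsmap : ∀ t : ℝ, (a + t) ::ₘ S.map (· + t) = (a ::ₘ S).map (· + t) := by
      intro t; simp [Multiset.map_cons]
    -- Step 1: the shifted vector still satisfies the cone condition
    have step1 : ∀ t : ℝ, 0 ≤ t → ∀ m, 1 ≤ m → m ≤ N + 2 →
        0 < ((a + t) ::ₘ S.map (· + t)).esymm m := by
      intro t ht m hm1 hm2
      rw [hconsmap t]
      exact esymm_shift_pos _ t ht m (by simp; omega)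
        (fun i hi => hyp' i (by omega)) (hyp m hm1 (by omega))
    -- Step 2: lower esymm of shifted S are positive
    have step2 : ∀ t : ℝ, 0 ≤ t → ∀ j, j ≤ N → 0 < (S.map (· + t)).esymm j := by
      intro t ht j hj
      obtain _ | j := j
      · rw [esymm_zero']; norm_num
      · exact IH (j + 1) (by omega) (a + t) (S.map (· + t)) (by simp; omega)
          (fun m hm1 hm2 => step1 t ht m hm1 (by omega))
    have base : ∀ j, j ≤ N → 0 < S.esymm j := by
      intro j hj
      have h := step2 0 le_rfl j hj
      have : S.map (· + (0:ℝ)) = S := by simp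
      rwa [this] at h
    by_contra h0
    push_neg at h0
    set c := Multiset.card S with hc
    set f : ℕ → ℝ → ℝ := fun i t =>
      ((i + (c - (N + 1))).choose (c - (N + 1)) : ℝ) * S.esymm (N + 1 - i) * t ^ i with hf
    set g : ℝ → ℝ := fun t => ∑ i ∈ Finset.range (N + 2), f i t with hg
    have hgt : ∀ t, g t = (S.map (· + t)).esymm (N + 1) :=
      fun t => (esymm_shift S t (N + 1) hcard).symm
    have hg0 : g 0 = S.esymm (N + 1) := by
      rw [hgt 0]
      have : S.map (· + (0:ℝ)) = S := by simp
      rw [this]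
    have hcont : Continuous g := by
      rw [hg]
      exact continuous_finset_sum _ (fun i _ =>
        (continuous_const.mul (continuous_pow i)))
    set T : ℝ := 1 - S.esymm (N + 1) with hT
    have hT1 : 1 ≤ T := by rw [hT]; linarith
    have hT0 : (0:ℝ) ≤ T := by linarith
    have hfnonneg : ∀ i, 1 ≤ i → i ≤ N + 1 → 0 ≤ f i T := by
      intro i hi1 hi2
      apply mul_nonneg (mul_nonneg (by positivity) ?_) (pow_nonneg hT0 i)
      rcases Nat.lt_or_ge (N + 1 - i) (N + 1) with h | h
      · exact le_of_lt (base _ (by omega))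
      · omega
    have hftop : T ≤ f (N + 1) T := by
      have h1 : S.esymm (N + 1 - (N + 1)) = 1 := by rw [Nat.sub_self]; exact esymm_zero' S
      have h2 : (1:ℝ) ≤ ((N + 1 + (c - (N + 1))).choose (c - (N + 1)) : ℝ) := by
        have := Nat.choose_pos (show c - (N+1) ≤ N + 1 + (c - (N+1)) by omega)
        exact_mod_cast this
      have h3 : T ≤ T ^ (N + 1) := le_self_pow₀ hT1 (Nat.succ_ne_zero N)
      calc T ≤ T ^ (N + 1) := h3
        _ = 1 * 1 * T ^ (N + 1) := by ring
        _ ≤ _ := by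
            rw [hf]
            apply mul_le_mul_of_nonneg_right _ (pow_nonneg hT0 _)
            rw [h1]
            nlinarith
    have hf0 : f 0 T = S.esymm (N + 1) := by
      rw [hf]; simp
    have hgT : 1 ≤ g T := by
      show (1:ℝ) ≤ ∑ i ∈ Finset.range (N + 2), f i T
      rw [Finset.sum_range_succ']
      have : ∑ i ∈ Finset.range (N + 1), f (i + 1) T =
          (∑ i ∈ Finset.range N, f (i + 1) T) + f (N + 1) T := Finset.sum_range_succ _ N
      rw [this, hf0]
      have hmid : 0 ≤ ∑ i ∈ Finset.range N, f (i + 1) T :=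
        Finset.sum_nonneg (fun i hi => hfnonneg (i + 1) (by omega)
          (by rw [Finset.mem_range] at hi; omega))
      have := hftop
      rw [hT] at *
      linarith
    -- IVT
    have hmem : (0:ℝ) ∈ Set.Icc (g 0) (g T) := by
      rw [Set.mem_Icc, hg0]
      constructor
      · exact h0
      · linarith
    obtain ⟨t₀, ht₀mem, hgt₀⟩ := intermediate_value_Icc hT0 hcont.continuousOn hmem
    have ht₀ : 0 ≤ t₀ := ht₀mem.1
    set E := S.map (· + t₀) with hE
    have eE1 : E.esymm (N + 1) = 0 := by rw [hE, ← hgt t₀, hgt₀]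
    have eEN : 0 < E.esymm N := step2 t₀ ht₀ N le_rfl
    have eE2 : 0 < E.esymm (N + 2) := by
      have h := step1 t₀ ht₀ (N + 2) (by omega) le_rfl
      rw [show N + 2 = (N + 1) + 1 from rfl, esymm_cons, eE1] at h
      simpa using h
    have := crux E N eEN eE1
    linarith


end GardingAux

/-- The k-th elementary symmetric polynomial of `x : Fin n → ℝ`. -/
def esym (n k : ℕ) (x : Fin n → ℝ) : ℝ :=
  ∑ t ∈ Finset.univ.powersetCard k, ∏ i ∈ t, x i

/-- σ_k(λ|i): the k-th elementary symmetric polynomial of `x` with the i-th entry removed. -/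
def esymDel (n k : ℕ) (x : Fin n → ℝ) (i : Fin n) : ℝ :=
  ∑ t ∈ (Finset.univ.erase i).powersetCard k, ∏ j ∈ t, x j

/-- For λ in the Gårding cone Γ_k, σ_{k-1}(λ|i) = ∂σ_k/∂λ_i > 0 for every index i. -/
theorem esymDel_pos_of_gardingCone (n k : ℕ) (hk : 1 ≤ k) (hkn : k ≤ n)
    (l : Fin n → ℝ)
    (hΓ : ∀ i : ℕ, 1 ≤ i → i ≤ k → 0 < esym n i l) :
    ∀ i : Fin n, 0 < esymDel n (k - 1) l i := by
  intro i
  set S : Multiset ℝ := (Finset.univ.erase i).val.map l with hS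
  have huv : (Finset.univ : Finset (Fin n)).val = i ::ₘ (Finset.univ.erase i).val := by
    rw [Finset.erase_val]
    exact (Multiset.cons_erase (by simp : i ∈ (Finset.univ : Finset (Fin n)).val)).symm
  have h1 : ∀ m, esym n m l = (l i ::ₘ S).esymm m := by
    intro m
    rw [esym, ← Finset.esymm_map_val l Finset.univ m, huv, Multiset.map_cons, hS]
  have h2 : esymDel n (k - 1) l i = S.esymm (k - 1) := by
    rw [esymDel, ← Finset.esymm_map_val l (Finset.univ.erase i) (k - 1), hS]
  have hcardS : Multiset.card S = n - 1 := by
    rw [hS, Multiset.card_map]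
    have : (Finset.univ.erase i).val.card = (Finset.univ.erase i).card := rfl
    rw [this, Finset.card_erase_of_mem (Finset.mem_univ i)]
    simp
  rw [h2]
  apply GardingAux.main (k - 1) (l i) S (by omega)
  intro m hm1 hm2
  rw [← h1 m]
  exact hΓ m hm1 (by omega)
end

section
/- For λ ∈ Γ_k with coordinates ordered λ₁ ≥ λ₂ ≥ ⋯ ≥ λₙ, the deleted symmetric functions are ordered oppositely: σ_{k-1}(λ|1) ≤ σ_{k-1}(λ|2) ≤ ⋯ ≤ σ_{k-1}(λ|n). -/
namespace GardingAux

open Polynomial Finset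

variable {ι : Type*} [DecidableEq ι]

/-- elementary symmetric function over a finset. -/
noncomputable def sig (x : ι → ℝ) (s : Finset ι) (j : ℕ) : ℝ :=
  ∑ t ∈ s.powersetCard j, ∏ i ∈ t, x i

lemma sig_zero (x : ι → ℝ) (s : Finset ι) : sig x s 0 = 1 := by
  simp [sig]

lemma sig_self (x : ι → ℝ) (s : Finset ι) : sig x s s.card = ∏ i ∈ s, x i := by
  simp [sig, Finset.powersetCard_self]

lemma sig_pos_of_pos {x : ι → ℝ} {s : Finset ι} (h : ∀ i ∈ s, 0 < x i) {j : ℕ}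
    (hj : j ≤ s.card) : 0 < sig x s j := by
  apply Finset.sum_pos
  · intro t ht
    rw [Finset.mem_powersetCard] at ht
    exact Finset.prod_pos fun i hi => h i (ht.1 hi)
  · exact Finset.powersetCard_nonempty.2 hj

/-- The polynomial `∏ (X + x i)`. -/
noncomputable def Pp (x : ι → ℝ) (s : Finset ι) : ℝ[X] :=
  ∏ i ∈ s, (X + C (x i))

lemma Pp_monic (x : ι → ℝ) (s : Finset ι) : (Pp x s).Monic :=
  monic_prod_of_monic _ _ fun _ _ => monic_X_add_C _

lemma Pp_natDegree (x : ι → ℝ) (s : Finset ι) : (Pp x s).natDegree = s.card := by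
  rw [Pp, natDegree_prod_of_monic _ _ fun _ _ => monic_X_add_C _]
  simp [natDegree_X_add_C]

lemma Pp_coeff (x : ι → ℝ) (s : Finset ι) {r : ℕ} (hr : r ≤ s.card) :
    (Pp x s).coeff r = sig x s (s.card - r) :=
  Finset.prod_X_add_C_coeff s x hr

lemma Pp_roots (x : ι → ℝ) (s : Finset ι) :
    (Pp x s).roots = s.val.map fun i => -(x i) := by
  rw [Pp, roots_prod _ _ (Monic.ne_zero (Pp_monic x s))]
  have : ∀ i : ι, (X + C (x i)).roots = {-(x i)} := by
    intro i
    rw [show (X + C (x i)) = X - C (-(x i)) by rw [map_neg, sub_neg_eq_add],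
      roots_X_sub_C]
  simp only [this]
  exact Multiset.bind_singleton s.val fun i => -(x i)

/-- real-rootedness. -/
def RR (p : ℝ[X]) : Prop := Multiset.card p.roots = p.natDegree

lemma RR_Pp (x : ι → ℝ) (s : Finset ι) : RR (Pp x s) := by
  rw [RR, Pp_roots, Pp_natDegree, Multiset.card_map, Finset.card_def]

lemma RR_derivative {p : ℝ[X]} (h : RR p) :
    RR (derivative p) ∧ (derivative p).natDegree = p.natDegree - 1 := by
  have h1 := p.card_roots_le_derivative
  have h2 := (derivative p).card_roots'
  have h3 := natDegree_derivative_le p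
  rw [RR] at h ⊢
  omega

lemma RR_iterate {p : ℝ[X]} (h : RR p) (m : ℕ) :
    RR (derivative^[m] p) ∧ (derivative^[m] p).natDegree = p.natDegree - m := by
  induction m with
  | zero => simpa using h
  | succ d hd =>
    rw [Function.iterate_succ_apply']
    refine ⟨(RR_derivative hd.1).1, ?_⟩
    rw [(RR_derivative hd.1).2, hd.2]
    omega

lemma RR_eq_prod {p : ℝ[X]} (h : RR p) :
    p = C p.leadingCoeff * (p.roots.map fun a => X - C a).prod :=
  (C_leadingCoeff_mul_prod_multiset_X_sub_C h).symm

lemma prod_eval (t : ℝ) (s : Multiset ℝ) :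
    ((s.map fun a => X - C a).prod).eval t = (s.map fun a => t - a).prod := by
  induction s using Multiset.induction with
  | empty => simp
  | cons a s ih => simp [Multiset.map_cons, Multiset.prod_cons, ih]

lemma evalPos {c t : ℝ} (hc : 0 < c) (s : Multiset ℝ) (hs : ∀ r ∈ s, r < t) :
    0 < (C c * (s.map fun a => X - C a).prod).eval t := by
  rw [eval_mul, eval_C, prod_eval]
  apply mul_pos hc
  apply Multiset.prod_pos
  intro y hy
  rw [Multiset.mem_map] at hy
  obtain ⟨r, hr, rfl⟩ := hy
  exact sub_pos.2 (hs r hr)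

lemma derivEvalPos {c t : ℝ} (hc : 0 < c) :
    ∀ s : Multiset ℝ, s ≠ 0 → (∀ r ∈ s, r < t) →
      0 < (derivative (C c * (s.map fun a => X - C a).prod)).eval t := by
  intro s
  induction s using Multiset.induction with
  | empty => intro h; exact absurd rfl h
  | cons a s ih =>
    intro _ hs
    have hrw : C c * ((a ::ₘ s).map fun a => X - C a).prod
        = (X - C a) * (C c * (s.map fun a => X - C a).prod) := by
      rw [Multiset.map_cons, Multiset.prod_cons]; ring
    have h1 : 0 < (C c * (s.map fun a => X - C a).prod).eval t :=
      evalPos hc s fun r hr => hs r (Multiset.mem_cons_of_mem hr)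
    have hta : (0:ℝ) < t - a := sub_pos.2 (hs a (Multiset.mem_cons_self a s))
    rw [hrw, derivative_mul, eval_add]
    have e1 : (derivative (X - C a) * (C c * (s.map fun a => X - C a).prod)).eval t
        = (C c * (s.map fun a => X - C a).prod).eval t := by
      simp [eval_mul]
    have e2 : ((X - C a) * derivative (C c * (s.map fun a => X - C a).prod)).eval t
        = (t - a) * (derivative (C c * (s.map fun a => X - C a).prod)).eval t := by
      simp [eval_mul]
    rw [e1, e2]
    rcases eq_or_ne s 0 with rfl | hne
    · have e3 : derivative (C c * ((0:Multiset ℝ).map fun a => X - C a).prod) = 0 := by simp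
      rw [e3, eval_zero, mul_zero, add_zero]
      exact h1
    · exact add_pos h1 (mul_pos hta (ih hne fun r hr => hs r (Multiset.mem_cons_of_mem hr)))

lemma iterDeriv_linear_mul (a : ℝ) (g : ℝ[X]) : ∀ m : ℕ,
    derivative^[m + 1] ((X + C a) * g) =
      (X + C a) * derivative^[m + 1] g + ((m + 1 : ℕ) : ℝ[X]) * derivative^[m] g := by
  intro m
  induction m with
  | zero =>
    simp only [zero_add, Function.iterate_one, Function.iterate_zero, id_eq, Nat.cast_one,
      one_mul]
    rw [derivative_mul, derivative_add, derivative_X, derivative_C, add_zero, one_mul]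
    ring
  | succ d hd =>
    rw [Function.iterate_succ_apply', hd, derivative_add, derivative_mul, derivative_mul,
      derivative_natCast, derivative_add, derivative_X, derivative_C,
      ← Function.iterate_succ_apply' derivative (d + 1) g,
      ← Function.iterate_succ_apply' derivative d g]
    push_cast
    ring

lemma eval_pos_of_coeff {p : ℝ[X]} {d : ℕ} (hd : p.natDegree < d) (h0 : 0 < p.coeff 0)
    (hc : ∀ j, 0 ≤ p.coeff j) {t : ℝ} (ht : 0 ≤ t) : 0 < p.eval t := by
  rw [eval_eq_sum_range' hd]
  apply Finset.sum_pos'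
  · intro j _
    exact mul_nonneg (hc j) (pow_nonneg ht j)
  · refine ⟨0, Finset.mem_range.2 (by omega), ?_⟩
    simpa using h0

lemma msum_pos : ∀ s : Multiset ℝ, (∀ a ∈ s, 0 < a) → s ≠ 0 → 0 < s.sum := by
  intro s
  induction s using Multiset.induction with
  | empty => intro _ h; exact absurd rfl h
  | cons a s ih =>
    intro h _
    rw [Multiset.sum_cons]
    rcases eq_or_ne s 0 with rfl | hne
    · simpa using h a (Multiset.mem_cons_self a _)
    · exact add_pos (h a (Multiset.mem_cons_self a _))
        (ih (fun b hb => h b (Multiset.mem_cons_of_mem hb)) hne)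

lemma esymm_pos {s : Multiset ℝ} (h : ∀ r ∈ s, 0 < r) {j : ℕ} (hj : j ≤ Multiset.card s) :
    0 < s.esymm j := by
  apply msum_pos
  · intro a ha
    rw [Multiset.mem_map] at ha
    obtain ⟨t, ht, rfl⟩ := ha
    rw [Multiset.mem_powersetCard] at ht
    exact Multiset.prod_pos fun y hy => h y (Multiset.mem_of_le ht.1 hy)
  · intro hcon
    have h0 : Multiset.powersetCard j s = 0 := Multiset.map_eq_zero.mp hcon
    have := Multiset.card_powersetCard j s
    rw [h0] at this
    simp only [Multiset.card_zero] at this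
    exact (Nat.choose_pos hj).ne' this.symm

/-- Key lemma: positivity of the deleted symmetric functions on the Garding cone. -/
lemma key (x : ι → ℝ) (s : Finset ι) (k : ℕ) (hk : 1 ≤ k) (hkN : k ≤ s.card)
    (hpos : ∀ j, 1 ≤ j → j ≤ k → 0 < sig x s j) :
    ∀ i ∈ s, ∀ m, m ≤ k - 1 → 0 < sig x (s.erase i) m := by
  intro i hi m hm
  rcases Nat.eq_zero_or_pos m with rfl | hm1
  · rw [sig_zero]; norm_num
  set N := s.card with hN
  have hcardμ : (s.erase i).card = N - 1 := by rw [Finset.card_erase_of_mem hi]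
  rcases eq_or_lt_of_le hkN with hkeq | hklt
  · -- k = N : all entries are positive
    have hall : ∀ j ∈ s, 0 < x j := by
      intro j hj
      by_contra hcon
      push_neg at hcon
      have hev : 0 < (Pp x s).eval (-(x j)) := by
        apply eval_pos_of_coeff (d := N + 1)
        · rw [Pp_natDegree]; omega
        · rw [Pp_coeff x s (by omega : 0 ≤ N), Nat.sub_zero]
          exact hpos N (by omega) (by omega)
        · intro r
          rcases le_or_gt r N with hr | hr
          · rw [Pp_coeff x s hr]
            rcases Nat.eq_zero_or_pos (N - r) with h0 | h0
            · rw [h0, sig_zero]; norm_num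
            · exact le_of_lt (hpos _ h0 (by omega))
          · rw [coeff_eq_zero_of_natDegree_lt (by rw [Pp_natDegree]; omega)]
        · linarith
      have : (Pp x s).eval (-(x j)) = 0 := by
        rw [Pp, eval_prod]
        apply Finset.prod_eq_zero hj
        simp
      linarith
    apply sig_pos_of_pos (fun j hj => hall j (Finset.mem_of_mem_erase hj))
    omega
  · -- k < N : main case
    have hkN1 : k ≤ N - 1 := by omega
    set μ : Finset ι := s.erase i with hμ
    have hPfact : Pp x s = (X + C (x i)) * Pp x μ := by
      rw [Pp, Pp, ← Finset.mul_prod_erase s _ hi]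
    obtain ⟨d, hd⟩ : ∃ d, N - k = d + 1 := ⟨N - k - 1, by omega⟩
    set R : ℝ[X] := derivative^[d] (Pp x μ) with hR
    set R' : ℝ[X] := derivative^[d + 1] (Pp x μ) with hR'
    have hR'deriv : R' = derivative R := by
      rw [hR', hR, Function.iterate_succ_apply']
    set Q : ℝ[X] := derivative^[d + 1] (Pp x s) with hQdef
    have hQ : Q = (X + C (x i)) * R' + ((d + 1 : ℕ) : ℝ[X]) * R := by
      rw [hQdef, hPfact, iterDeriv_linear_mul]
    -- coefficients of Q are positive
    have hQcoeff : ∀ j, j ≤ k → 0 < Q.coeff j := by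
      intro j hj
      rw [hQdef, coeff_iterate_derivative, nsmul_eq_mul]
      apply mul_pos
      · have : ¬ (j + (d + 1) < d + 1) := by omega
        have := (not_iff_not.2 Nat.descFactorial_eq_zero_iff_lt).2 this
        exact_mod_cast Nat.pos_of_ne_zero this
      · rw [Pp_coeff x s (by omega : j + (d + 1) ≤ N)]
        have : N - (j + (d + 1)) = k - j := by omega
        rw [this]
        rcases eq_or_lt_of_le hj with rfl | hjlt
        · rw [Nat.sub_self, sig_zero]; norm_num
        · exact hpos _ (by omega) (by omega)
    have hQeval : ∀ t : ℝ, 0 ≤ t → 0 < Q.eval t := by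
      intro t ht
      apply eval_pos_of_coeff (d := k + 1) _ (hQcoeff 0 (by omega)) _ ht
      · calc Q.natDegree ≤ (Pp x s).natDegree - (d + 1) := natDegree_iterate_derivative _ _
          _ < k + 1 := by rw [Pp_natDegree]; omega
      · intro j
        rcases le_or_gt j k with hj | hj
        · exact le_of_lt (hQcoeff j hj)
        · rw [coeff_eq_zero_of_natDegree_lt]
          calc Q.natDegree ≤ (Pp x s).natDegree - (d + 1) := natDegree_iterate_derivative _ _
            _ < j := by rw [Pp_natDegree]; omega
    -- real-rootedness bookkeeping
    have hRRμ : RR (Pp x μ) := RR_Pp x μ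
    have hdegμ : (Pp x μ).natDegree = N - 1 := by rw [Pp_natDegree, hcardμ]
    have hRR_R : RR R ∧ R.natDegree = k := by
      obtain ⟨h1, h2⟩ := RR_iterate hRRμ d
      exact ⟨h1, by rw [h2, hdegμ]; omega⟩
    have hRR_R' : RR R' ∧ R'.natDegree = k - 1 := by
      obtain ⟨h1, h2⟩ := RR_iterate hRRμ (d + 1)
      exact ⟨h1, by rw [h2, hdegμ]; omega⟩
    -- leading coefficients are positive
    have hlc : ∀ m' : ℕ, m' ≤ N - 1 →
        0 < (derivative^[m'] (Pp x μ)).leadingCoeff := by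
      intro m' hm'
      have hdeg : (derivative^[m'] (Pp x μ)).natDegree = N - 1 - m' := by
        rw [(RR_iterate hRRμ m').2, hdegμ]
      rw [leadingCoeff, hdeg, coeff_iterate_derivative, nsmul_eq_mul]
      have he : (Pp x μ).coeff (N - 1 - m' + m') = 1 := by
        rw [show N - 1 - m' + m' = (Pp x μ).natDegree by rw [hdegμ]; omega, coeff_natDegree,
          (Pp_monic x μ).leadingCoeff]
      rw [he, mul_one]
      have : ¬ (N - 1 - m' + m' < m') := by omega
      have := (not_iff_not.2 Nat.descFactorial_eq_zero_iff_lt).2 this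
      exact_mod_cast Nat.pos_of_ne_zero this
    have hlcR : 0 < R.leadingCoeff := hlc d (by omega)
    have hlcR' : 0 < R'.leadingCoeff := hlc (d + 1) (by omega)
    -- all roots of R' are negative
    have hneg : ∀ r ∈ R'.roots, r < 0 := by
      by_contra hcon
      push_neg at hcon
      obtain ⟨r0, hr0, hr0nn⟩ := hcon
      have hne : R'.roots.toFinset.Nonempty := ⟨r0, Multiset.mem_toFinset.2 hr0⟩
      set ρ := R'.roots.toFinset.max' hne with hρ
      have hρmem : ρ ∈ R'.roots := Multiset.mem_toFinset.1 (R'.roots.toFinset.max'_mem hne)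
      have hρmax : ∀ r ∈ R'.roots, r ≤ ρ := fun r hr =>
        R'.roots.toFinset.le_max' r (Multiset.mem_toFinset.2 hr)
      have hρnn : 0 ≤ ρ := le_trans hr0nn (hρmax r0 hr0)
      have hR'ρ : R'.eval ρ = 0 := (Polynomial.mem_roots'.1 hρmem).2
      have hRρ : 0 < R.eval ρ := by
        have h1 := hQeval ρ hρnn
        rw [hQ] at h1
        simp only [eval_add, eval_mul, eval_natCast, hR'ρ, mul_zero, zero_add] at h1
        have hc : (0 : ℝ) < ((d + 1 : ℕ) : ℝ) := by positivity
        nlinarith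
      have hRroots : ∀ r ∈ R.roots, r < ρ := by
        intro r hr
        rcases lt_trichotomy r ρ with h | h | h
        · exact h
        · exfalso
          have : R.eval ρ = 0 := h ▸ (Polynomial.mem_roots'.1 hr).2
          linarith
        · exfalso
          have hRr : R.eval r = 0 := (Polynomial.mem_roots'.1 hr).2
          obtain ⟨ξ, hξ, hslope⟩ := exists_hasDerivAt_eq_slope (fun y => R.eval y)
            (fun y => (derivative R).eval y) h (Polynomial.continuous R).continuousOn
            (fun y _ => R.hasDerivAt y)
          have hslneg : (derivative R).eval ξ < 0 := by
            rw [hslope, hRr]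
            apply div_neg_of_neg_of_pos <;> linarith
          have hslpos : 0 < (derivative R).eval ξ := by
            rw [← hR'deriv]
            nth_rewrite 1 [RR_eq_prod hRR_R'.1]
            apply evalPos hlcR'
            intro r' hr'
            exact lt_of_le_of_lt (hρmax r' hr') hξ.1
          linarith
      -- contradiction: derivative of R is positive at ρ, but ρ is a root of R'
      have hfin : 0 < (derivative R).eval ρ := by
        nth_rewrite 1 [RR_eq_prod hRR_R.1]
        apply derivEvalPos hlcR
        · intro hcon0
          have := congrArg Multiset.card hcon0
          rw [hRR_R.1, hRR_R.2] at this
          simp only [Multiset.card_zero] at this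
          omega
        · exact hRroots
      rw [← hR'deriv, hR'ρ] at hfin
      exact lt_irrefl _ hfin
    -- conclude : the coefficients of R' are positive, giving positivity of sig
    have hcoeffR' : 0 < R'.coeff (k - 1 - m) := by
      nth_rewrite 1 [RR_eq_prod hRR_R'.1]
      rw [coeff_C_mul]
      apply mul_pos hlcR'
      have hmapeq : (R'.roots.map fun a => X - C a)
          = (R'.roots.map fun a : ℝ => -a).map fun a => X + C a := by
        rw [Multiset.map_map]
        apply Multiset.map_congr rfl
        intro a _
        rw [Function.comp_apply, map_neg, sub_eq_add_neg]
      rw [hmapeq, Multiset.prod_X_add_C_coeff]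
      · apply esymm_pos
        · intro r' hr'
          rw [Multiset.mem_map] at hr'
          obtain ⟨a, ha, rfl⟩ := hr'
          simpa using hneg a ha
        · rw [Multiset.card_map, hRR_R'.1, hRR_R'.2]
          omega
      · rw [Multiset.card_map, hRR_R'.1, hRR_R'.2]
        omega
    -- translate back to sig
    rw [hR', coeff_iterate_derivative, nsmul_eq_mul] at hcoeffR'
    have hidx : k - 1 - m + (d + 1) = (N - 1) - m := by omega
    rw [hidx, Pp_coeff x μ (by rw [hcardμ]; omega)] at hcoeffR'
    have hidx2 : (s.erase i).card - ((N - 1) - m) = m := by rw [hcardμ]; omega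
    rw [hidx2] at hcoeffR'
    rcases le_or_gt (sig x (s.erase i) m) 0 with hle | hlt
    · exfalso
      have hdf : (0:ℝ) ≤ ((k - 1 - m + (d + 1)).descFactorial (d + 1) : ℝ) := by positivity
      nlinarith
    · exact hlt

/-- Deletion identity : `σ_m(s) = σ_m(s∖a) + x a * σ_{m-1}(s∖a)`. -/
lemma split (x : ι → ℝ) {s : Finset ι} {a : ι} (ha : a ∈ s) {m : ℕ} (hm1 : 1 ≤ m)
    (hm : m ≤ s.card) :
    sig x s m = sig x (s.erase a) m + x a * sig x (s.erase a) (m - 1) := by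
  set N := s.card with hN
  have hcard : (s.erase a).card = N - 1 := Finset.card_erase_of_mem ha
  have hN1 : 1 ≤ N := le_trans hm1 hm
  rcases eq_or_lt_of_le hm with hmeq | hlt
  · -- m = N
    have h0 : sig x (s.erase a) m = 0 := by
      rw [sig, Finset.powersetCard_eq_empty.2 (by omega), Finset.sum_empty]
    have h1 : sig x (s.erase a) (m - 1) = ∏ i ∈ s.erase a, x i := by
      rw [show m - 1 = (s.erase a).card by omega, sig_self]
    rw [h0, h1, zero_add, show m = s.card from hmeq, sig_self]
    exact (Finset.mul_prod_erase s x ha).symm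
  · -- m < N
    have hfact : Pp x s = (X + C (x a)) * Pp x (s.erase a) := by
      rw [Pp, Pp, ← Finset.mul_prod_erase s _ ha]
    have hLHS : (Pp x s).coeff (N - m) = sig x s m := by
      rw [Pp_coeff x s (by omega : N - m ≤ N), show N - (N - m) = m by omega]
    have hexp : ((X + C (x a)) * Pp x (s.erase a)).coeff (N - m)
        = (Pp x (s.erase a)).coeff (N - m - 1) + x a * (Pp x (s.erase a)).coeff (N - m) := by
      rw [add_mul, coeff_add, coeff_C_mul]
      congr 1
      obtain ⟨u, hu⟩ : ∃ u, N - m = u + 1 := ⟨N - m - 1, by omega⟩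
      rw [hu, coeff_X_mul, show u + 1 - 1 = u by omega]
    have h2 : (Pp x (s.erase a)).coeff (N - m - 1) = sig x (s.erase a) m := by
      rw [Pp_coeff x _ (by omega : N - m - 1 ≤ (s.erase a).card), hcard,
        show N - 1 - (N - m - 1) = m by omega]
    have h3 : (Pp x (s.erase a)).coeff (N - m) = sig x (s.erase a) (m - 1) := by
      rw [Pp_coeff x _ (by omega : N - m ≤ (s.erase a).card), hcard,
        show N - 1 - (N - m) = m - 1 by omega]
    rw [← hLHS, hfact, hexp, h2, h3]

end GardingAux

/-- For λ ∈ Γ_k with decreasing entries, σ_{k-1}(λ|1) ≤ σ_{k-1}(λ|2) ≤ ⋯ ≤ σ_{k-1}(λ|n). -/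
theorem esymDel_monotone_of_gardingCone (n k : ℕ) (hk : 1 ≤ k) (hkn : k ≤ n)
    (l : Fin n → ℝ)
    (hΓ : ∀ i : ℕ, 1 ≤ i → i ≤ k → 0 < esym n i l)
    (hmono : ∀ i j : Fin n, i ≤ j → l j ≤ l i) :
    ∀ i j : Fin n, i ≤ j → esymDel n (k - 1) l i ≤ esymDel n (k - 1) l j := by
  intro i j hij
  rcases eq_or_lt_of_le hij with rfl | hlt
  · exact le_refl _
  have hne : i ≠ j := ne_of_lt hlt
  have hEi : esymDel n (k - 1) l i = GardingAux.sig l (Finset.univ.erase i) (k - 1) := rfl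
  have hEj : esymDel n (k - 1) l j = GardingAux.sig l (Finset.univ.erase j) (k - 1) := rfl
  rcases eq_or_lt_of_le hk with hk1 | hk2
  · -- k = 1 : both sides are 1
    rw [hEi, hEj, ← hk1, Nat.sub_self, GardingAux.sig_zero, GardingAux.sig_zero]
  -- now 2 ≤ k
  have hcard : (Finset.univ : Finset (Fin n)).card = n := by
    rw [Finset.card_univ, Fintype.card_fin]
  have hsig : ∀ j', 1 ≤ j' → j' ≤ k → 0 < GardingAux.sig l Finset.univ j' := fun j' h1 h2 =>
    hΓ j' h1 h2
  have h1 := GardingAux.key l Finset.univ k hk (by rw [hcard]; exact hkn) hsig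
  have hcardj : (Finset.univ.erase j).card = n - 1 := by
    rw [Finset.card_erase_of_mem (Finset.mem_univ j), hcard]
  have h2 := GardingAux.key l (Finset.univ.erase j) (k - 1) (by omega)
    (by rw [hcardj]; omega)
    (fun j' hj1 hj2 => h1 j (Finset.mem_univ j) j' (by omega))
  have hD : 0 < GardingAux.sig l ((Finset.univ.erase j).erase i) (k - 2) :=
    h2 i (Finset.mem_erase.2 ⟨hne, Finset.mem_univ i⟩) (k - 2) (by omega)
  have hcardi : (Finset.univ.erase i).card = n - 1 := by
    rw [Finset.card_erase_of_mem (Finset.mem_univ i), hcard]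
  have e1 := GardingAux.split l (s := Finset.univ.erase i) (a := j)
    (Finset.mem_erase.2 ⟨hne.symm, Finset.mem_univ j⟩) (m := k - 1) (by omega)
    (by rw [hcardi]; omega)
  have e2 := GardingAux.split l (s := Finset.univ.erase j) (a := i)
    (Finset.mem_erase.2 ⟨hne, Finset.mem_univ i⟩) (m := k - 1) (by omega)
    (by rw [hcardj]; omega)
  rw [Finset.erase_right_comm] at e1
  have hcomm : (k : ℕ) - 1 - 1 = k - 2 := by omega
  rw [hcomm] at e1 e2
  rw [hEi, hEj, e1, e2]
  have hmul : l j * GardingAux.sig l ((Finset.univ.erase j).erase i) (k - 2)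
      ≤ l i * GardingAux.sig l ((Finset.univ.erase j).erase i) (k - 2) :=
    mul_le_mul_of_nonneg_right (hmono i j hij) (le_of_lt hD)
  linarith
end

section
/- Newton–MacLaurin inequality: if λ ∈ Γ_m and m > l ≥ 0, r > s ≥ 0, m ≥ r, l ≥ s, then [ (σ_m(λ)/C(n,m)) / (σ_l(λ)/C(n,l)) ]^{1/(m-l)} ≤ [ (σ_r(λ)/C(n,r)) / (σ_s(λ)/C(n,s)) ]^{1/(r-s)}. -/
section Aux
open Multiset Polynomial

lemma esymm_zero' (s : Multiset ℝ) : s.esymm 0 = 1 := by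
  simp [Multiset.esymm]

lemma esymm_cons (a : ℝ) (s : Multiset ℝ) (k : ℕ) :
    (a ::ₘ s).esymm (k+1) = s.esymm (k+1) + a * s.esymm k := by
  simp only [Multiset.esymm, powersetCard_cons, Multiset.map_add, Multiset.sum_add,
    Multiset.map_map, Function.comp_def, Multiset.prod_cons]
  rw [Multiset.sum_map_mul_left]

lemma esymm_eq_zero (s : Multiset ℝ) (k : ℕ) (h : Multiset.card s < k) : s.esymm k = 0 := by
  obtain ⟨i, hi, rfl⟩ : ∃ i, 0 < i ∧ k = Multiset.card s + i :=
    ⟨k - Multiset.card s, by omega, by omega⟩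
  rw [Multiset.esymm, powersetCard_card_add s hi]
  simp

lemma esymm_card (s : Multiset ℝ) : s.esymm (Multiset.card s) = s.prod := by
  induction s using Multiset.induction with
  | empty => simp [Multiset.esymm]
  | cons a s ih =>
    rw [Multiset.card_cons, esymm_cons, esymm_eq_zero s _ (by omega), ih, Multiset.prod_cons]
    ring

lemma esymm_one' (s : Multiset ℝ) : s.esymm 1 = s.sum := by
  rw [Multiset.esymm, powersetCard_one, Multiset.map_map]
  simp [Function.comp_def]

lemma sq_sum_identity (s : Multiset ℝ) :
    s.sum ^ 2 = (s.map (fun x => x ^ 2)).sum + 2 * s.esymm 2 := by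
  induction s using Multiset.induction with
  | empty => rw [esymm_eq_zero 0 2 (by simp)]; simp
  | cons a s ih =>
    have hc2 : (a ::ₘ s).esymm 2 = s.esymm 2 + a * s.esymm 1 := esymm_cons a s 1
    rw [Multiset.sum_cons, Multiset.map_cons, Multiset.sum_cons, hc2, esymm_one']
    nlinarith [ih]

lemma sub_sq_sum (a : ℝ) (s : Multiset ℝ) :
    (s.map (fun b => (a - b) ^ 2)).sum =
      (Multiset.card s : ℝ) * a ^ 2 - 2 * a * s.sum + (s.map (fun x => x ^ 2)).sum := by
  induction s using Multiset.induction with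
  | empty => simp
  | cons c s ih =>
    rw [Multiset.map_cons, Multiset.sum_cons, Multiset.map_cons, Multiset.sum_cons,
      Multiset.sum_cons, Multiset.card_cons]
    push_cast
    nlinarith [ih]

lemma cs_multiset (s : Multiset ℝ) :
    s.sum ^ 2 ≤ (Multiset.card s : ℝ) * (s.map (fun x => x ^ 2)).sum := by
  induction s using Multiset.induction with
  | empty => simp
  | cons a s ih =>
    rw [Multiset.sum_cons, Multiset.map_cons, Multiset.sum_cons, Multiset.card_cons]
    have key := sub_sq_sum a s
    have hnn : (0:ℝ) ≤ (s.map (fun b => (a - b) ^ 2)).sum := by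
      apply Multiset.sum_nonneg
      intro x hx
      obtain ⟨b, _, rfl⟩ := Multiset.mem_map.mp hx
      positivity
    push_cast
    nlinarith [ih, hnn, key]

/-- Newton's inequality in the case k = 1. -/
lemma newton_one (s : Multiset ℝ) :
    2 * (Multiset.card s : ℝ) * s.esymm 2 ≤ ((Multiset.card s : ℝ) - 1) * s.esymm 1 ^ 2 := by
  have h1 := cs_multiset s
  have h2 := sq_sum_identity s
  rw [esymm_one']
  nlinarith [h1, h2]

lemma esymm_recip (s : Multiset ℝ) (h0 : (0:ℝ) ∉ s) :
    ∀ j ≤ Multiset.card s,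
      s.esymm (Multiset.card s - j) = s.prod * (s.map Inv.inv).esymm j := by
  induction s using Multiset.induction with
  | empty =>
    intro j hj
    obtain rfl : j = 0 := by simpa using hj
    simp [Multiset.esymm]
  | cons a s ih =>
    have ha : a ≠ 0 := fun h => h0 (h ▸ Multiset.mem_cons_self a s)
    have h0s : (0:ℝ) ∉ s := fun h => h0 (Multiset.mem_cons_of_mem h)
    intro j hj
    rw [Multiset.card_cons] at hj
    set c := Multiset.card s with hc
    rcases Nat.eq_zero_or_pos j with rfl | hjpos
    · have h3 := esymm_card (a ::ₘ s)
      rw [Multiset.card_cons] at h3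
      simp only [Nat.sub_zero, Multiset.card_cons, ← hc] at h3 ⊢
      rw [h3]
      simp [Multiset.esymm]
    obtain ⟨i, rfl⟩ : ∃ i, j = i + 1 := ⟨j - 1, by omega⟩
    rw [Multiset.map_cons]
    rcases Nat.lt_or_ge i c with hic | hic
    · -- i + 1 ≤ c
      have h1 : Multiset.card (a ::ₘ s) - (i+1) = (c - (i+1)) + 1 := by
        rw [Multiset.card_cons]; omega
      rw [h1, esymm_cons, esymm_cons]
      have e1 : s.esymm (c - (i+1) + 1) = s.prod * (s.map Inv.inv).esymm i := by
        have : c - (i+1) + 1 = c - i := by omega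
        rw [this, ih h0s i (by omega)]
      have e2 : s.esymm (c - (i+1)) = s.prod * (s.map Inv.inv).esymm (i+1) := by
        rw [ih h0s (i+1) (by omega)]
      rw [e1, e2, Multiset.prod_cons]
      field_simp
      ring
    · -- i = c, j = c + 1
      have hi : i = c := by omega
      subst hi
      have h1 : Multiset.card (a ::ₘ s) - (c+1) = 0 := by
        rw [Multiset.card_cons]; omega
      rw [h1]
      have h2 : (a⁻¹ ::ₘ s.map Inv.inv).esymm (c+1) = (a⁻¹ ::ₘ s.map Inv.inv).prod := by
        have : c + 1 = Multiset.card (a⁻¹ ::ₘ s.map Inv.inv) := by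
          rw [Multiset.card_cons, Multiset.card_map]
        rw [this, esymm_card]
      rw [h2, Multiset.prod_cons, Multiset.prod_cons, prod_map_inv']
      have hsne : s.prod ≠ 0 := Multiset.prod_ne_zero h0s
      simp only [Multiset.esymm, powersetCard_zero_left]
      field_simp
      simp

lemma deriv_step (s : Multiset ℝ) (hs : 1 ≤ Multiset.card s) :
    ∃ t : Multiset ℝ, Multiset.card t = Multiset.card s - 1 ∧
      ∀ j ≤ Multiset.card s - 1,
        (Multiset.card s : ℝ) * t.esymm j = ((Multiset.card s : ℝ) - j) * s.esymm j := by
  set n := Multiset.card s with hn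
  set P : ℝ[X] := (s.map fun a => X - C a).prod with hPdef
  have hP : P.Monic := monic_multiset_prod_of_monic _ _ fun a _ => monic_X_sub_C a
  have hdeg : P.natDegree = n := by
    rw [hPdef, natDegree_multiset_prod_X_sub_C_eq_card]
  have hroots : P.roots = s := roots_multiset_prod_X_sub_C s
  have hd1 : (derivative P).natDegree ≤ n - 1 := (natDegree_derivative_le P).trans (by omega)
  have h1 := P.card_roots_le_derivative
  have h2 := (derivative P).card_roots'
  rw [hroots, ← hn] at h1
  have hcard : Multiset.card (derivative P).roots = n - 1 := by omega
  have hndP' : (derivative P).natDegree = n - 1 := by omega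
  refine ⟨(derivative P).roots, hcard, ?_⟩
  intro j hj
  have e1 : (derivative P).coeff (n - 1 - j) =
      P.coeff (n - 1 - j + 1) * ((n - 1 - j : ℕ) + 1) := coeff_derivative P (n - 1 - j)
  have e2 : P.coeff (n - 1 - j + 1) = (-1) ^ j * s.esymm j := by
    have h : n - 1 - j + 1 = n - j := by omega
    rw [h, hPdef, Multiset.prod_X_sub_C_coeff s (by omega : n - j ≤ Multiset.card s)]
    rw [← hn]
    congr 2 <;> omega
  have e3 : (derivative P).coeff (n - 1 - j) =
      (derivative P).leadingCoeff * (-1) ^ j * (derivative P).roots.esymm j := by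
    rw [Polynomial.coeff_eq_esymm_roots_of_card (hcard.trans hndP'.symm) (by omega)]
    rw [hndP']
    have hj' : n - 1 - (n - 1 - j) = j := by omega
    rw [hj']
  have e4 : (derivative P).leadingCoeff = (n : ℝ) := by
    rw [Polynomial.leadingCoeff, hndP']
    have : (derivative P).coeff (n - 1) = P.coeff (n - 1 + 1) * ((n - 1 : ℕ) + 1) :=
      coeff_derivative P (n - 1)
    rw [this]
    have h : n - 1 + 1 = n := by omega
    rw [h, ← hdeg, hP.coeff_natDegree, one_mul, hdeg]
    rw [Nat.cast_sub hs]
    push_cast; ring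
  rw [e4] at e3
  rw [e3, e2] at e1
  have hpow : ((-1 : ℝ)) ^ j ≠ 0 := by positivity
  have hc : ((n - 1 - j : ℕ) : ℝ) + 1 = (n : ℝ) - j := by
    rw [Nat.cast_sub (by omega), Nat.cast_sub (by omega)]
    push_cast; ring
  rw [hc] at e1
  have key : (-1 : ℝ) ^ j * ((n : ℝ) * (derivative P).roots.esymm j)
      = (-1 : ℝ) ^ j * (((n : ℝ) - j) * s.esymm j) := by linear_combination e1
  exact mul_left_cancel₀ hpow key

lemma choose_two_real (n : ℕ) : ((n.choose 2 : ℕ) : ℝ) * 2 = n * (n - 1) := by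
  rcases Nat.eq_zero_or_pos n with rfl | hn
  · simp
  have h : n.choose 2 * 2 = n * (n - 1) := by
    have hev := Nat.even_mul_succ_self (n - 1)
    rw [Nat.sub_add_cancel hn] at hev
    have hdvd : 2 ∣ n * (n - 1) := by
      rw [Nat.mul_comm]
      exact hev.two_dvd
    rw [Nat.choose_two_right, Nat.div_mul_cancel hdvd]
  have := congrArg (fun x : ℕ => (x : ℝ)) h
  push_cast at this
  rw [Nat.cast_sub hn] at this
  push_cast at this
  linarith [this]

/-- Newton's inequality. -/
lemma newton_ineq (N : ℕ) : ∀ (s : Multiset ℝ) (k : ℕ), Multiset.card s = N → 1 ≤ k → k + 1 ≤ N →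
    s.esymm (k-1) / (N.choose (k-1) : ℝ) * (s.esymm (k+1) / (N.choose (k+1) : ℝ))
      ≤ (s.esymm k / (N.choose k : ℝ)) ^ 2 := by
  induction N with
  | zero => intro s k _ _ h; omega
  | succ N IH =>
    intro s k hcard hk1 hkN
    rcases Nat.lt_or_ge (k+1) (N+1) with hlt | hge
    · -- inductive step via derivative
      obtain ⟨t, htc, ht⟩ := deriv_step s (by omega)
      rw [hcard] at ht htc
      simp only [Nat.add_sub_cancel] at ht htc
      have conv : ∀ j ≤ N, s.esymm j / ((N+1).choose j : ℝ) = t.esymm j / (N.choose j : ℝ) := by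
        intro j hj
        have h1 := ht j hj
        have hch := Nat.choose_mul_succ_eq N j
        have hch' : ((N.choose j : ℕ) : ℝ) * (N + 1) = ((N+1).choose j : ℝ) * ((N+1) - j) := by
          have := congrArg (fun x : ℕ => (x : ℝ)) hch
          push_cast at this
          rw [Nat.cast_sub (by omega : j ≤ N + 1)] at this
          push_cast at this
          linarith [this]
        have hc1 : (0:ℝ) < ((N+1).choose j : ℝ) := by
          exact_mod_cast Nat.choose_pos (by omega)
        have hc2 : (0:ℝ) < (N.choose j : ℝ) := by
          exact_mod_cast Nat.choose_pos hj
        have hNj : (0:ℝ) < (N+1 : ℝ) - j := by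
          have : (j:ℝ) ≤ N := by exact_mod_cast hj
          linarith
        rw [div_eq_div_iff hc1.ne' hc2.ne']
        push_cast at h1 ⊢
        have key : (s.esymm j * (N.choose j : ℝ)) * ((N:ℝ)+1)
            = (t.esymm j * ((N+1).choose j : ℝ)) * ((N:ℝ)+1) := by
          linear_combination s.esymm j * hch' - ((N+1).choose j : ℝ) * h1
        exact mul_right_cancel₀ (by positivity) key
      rw [conv (k-1) (by omega), conv k (by omega), conv (k+1) (by omega)]
      exact IH t k htc hk1 (by omega)
    · -- base case: k + 1 = N + 1
      have hkN' : k = N := by omega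
      subst hkN'
      have hc : Multiset.card s = k + 1 := hcard
      have hchoose1 : (k+1).choose (k+1) = 1 := Nat.choose_self _
      have hchoose2 : (k+1).choose k = k+1 := Nat.choose_succ_self_right _
      have hchoose3 : (k+1).choose (k-1) = (k+1).choose 2 := by
        have : k - 1 = (k+1) - 2 := by omega
        rw [this, Nat.choose_symm (by omega)]
      rw [hchoose1, hchoose2, hchoose3]
      by_cases h0 : (0:ℝ) ∈ s
      · have : s.esymm (k+1) = 0 := by
          rw [← hc, esymm_card]
          exact Multiset.prod_eq_zero h0
        rw [this]
        simp only [Nat.cast_one, div_one, mul_zero]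
        positivity
      · set y := s.map Inv.inv with hy
        have hcy : Multiset.card y = k + 1 := by rw [hy, Multiset.card_map, hc]
        have e0 : s.esymm (k+1) = s.prod := by rw [← hc, esymm_card]
        have e1 : s.esymm k = s.prod * y.esymm 1 := by
          have := esymm_recip s h0 1 (by omega)
          rwa [hc, Nat.add_sub_cancel] at this
        have e2 : s.esymm (k-1) = s.prod * y.esymm 2 := by
          have := esymm_recip s h0 2 (by omega)
          rwa [hc, show k + 1 - 2 = k - 1 from by omega] at this
        have hnewt := newton_one y
        rw [hcy] at hnewt
        push_cast at hnewt
        have hch2 := choose_two_real (k+1)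
        push_cast at hch2
        have hc2pos : (0:ℝ) < ((k+1).choose 2 : ℝ) := by
          exact_mod_cast Nat.choose_pos (by omega)
        have hkpos : (0:ℝ) < (k:ℝ) + 1 := by positivity
        rw [e0, e1, e2]
        rw [Nat.cast_one, div_one, div_pow, div_mul_eq_mul_div, div_le_div_iff₀ hc2pos (by positivity)]
        have hsq : (0:ℝ) ≤ s.prod ^ 2 := sq_nonneg _
        push_cast
        nlinarith [mul_le_mul_of_nonneg_left hnewt hsq, hch2, hc2pos, sq_nonneg (s.prod * y.esymm 1)]

end Aux

section Aux2
open Finset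

lemma gm_mono (q : ℕ → ℝ) (m l r s : ℕ)
    (hpos : ∀ j, 1 ≤ j → j ≤ m → 0 < q j)
    (hmono : ∀ i j, 1 ≤ i → i ≤ j → j ≤ m → q j ≤ q i)
    (hlm : l < m) (hsr : s < r) (hrm : r ≤ m) (hsl : s ≤ l) :
    (∏ j ∈ Finset.Ioc l m, q j) ^ (r - s) ≤ (∏ j ∈ Finset.Ioc s r, q j) ^ (m - l) := by
  set A := ∏ j ∈ Finset.Ioc l m, q j with hA
  set B := ∏ j ∈ Finset.Ioc s r, q j with hB
  set C := ∏ j ∈ Finset.Ioc s l, q j with hC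
  set D := ∏ j ∈ Finset.Ioc r m, q j with hD
  have hposIoc : ∀ (a b : ℕ), b ≤ m → 0 < ∏ j ∈ Finset.Ioc a b, q j := by
    intro a b hb
    apply Finset.prod_pos
    intro j hj
    rw [Finset.mem_Ioc] at hj
    exact hpos j (by omega) (by omega)
  have hApos : 0 < A := hposIoc l m le_rfl
  have hBpos : 0 < B := hposIoc s r hrm
  have hCpos : 0 < C := hposIoc s l (by omega)
  have hDpos : 0 < D := hposIoc r m le_rfl
  have hsplit : C * A = B * D := by
    rw [hC, hA, hB, hD, Finset.prod_Ioc_consecutive q (by omega : s ≤ l) (by omega : l ≤ m),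
      Finset.prod_Ioc_consecutive q (by omega : s ≤ r) hrm]
  -- Step 1 : A ^ (l - s) ≤ C ^ (m - l)
  have step1 : A ^ (l - s) ≤ C ^ (m - l) := by
    have h1 : A ^ (l - s) = ∏ j ∈ Finset.Ioc s l, A := by
      rw [Finset.prod_const, Nat.card_Ioc]
    have h2 : C ^ (m - l) = ∏ j ∈ Finset.Ioc s l, q j ^ (m - l) := by
      rw [hC, ← Finset.prod_pow]
    rw [h1, h2]
    apply Finset.prod_le_prod
    · intro j _; exact hApos.le
    · intro j hj
      rw [Finset.mem_Ioc] at hj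
      calc A ≤ ∏ i ∈ Finset.Ioc l m, q j := by
              apply Finset.prod_le_prod
              · intro i hi
                rw [Finset.mem_Ioc] at hi
                exact (hpos i (by omega) (by omega)).le
              · intro i hi
                rw [Finset.mem_Ioc] at hi
                exact hmono j i (by omega) (by omega) (by omega)
        _ = q j ^ (m - l) := by rw [Finset.prod_const, Nat.card_Ioc]

  -- Step 2 : D ^ (r - s) ≤ B ^ (m - r)
  have step2 : D ^ (r - s) ≤ B ^ (m - r) := by
    have h1 : D ^ (r - s) = ∏ j ∈ Finset.Ioc s r, D := by
      rw [Finset.prod_const, Nat.card_Ioc]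
    have h2 : B ^ (m - r) = ∏ j ∈ Finset.Ioc s r, q j ^ (m - r) := by
      rw [hB, ← Finset.prod_pow]
    rw [h1, h2]
    apply Finset.prod_le_prod
    · intro j _; exact hDpos.le
    · intro j hj
      rw [Finset.mem_Ioc] at hj
      calc D ≤ ∏ i ∈ Finset.Ioc r m, q j := by
              apply Finset.prod_le_prod
              · intro i hi
                rw [Finset.mem_Ioc] at hi
                exact (hpos i (by omega) (by omega)).le
              · intro i hi
                rw [Finset.mem_Ioc] at hi
                exact hmono j i (by omega) (by omega) (by omega)
        _ = q j ^ (m - r) := by rw [Finset.prod_const, Nat.card_Ioc]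
  -- combine
  have key : (A ^ (r - s)) ^ (m - s) ≤ (B ^ (m - l)) ^ (m - s) := by
    have e1 : (A ^ (r - s)) ^ (m - s) = (A ^ (m - l) * A ^ (l - s)) ^ (r - s) := by
      have hms : (m - l) + (l - s) = m - s := by omega
      rw [← pow_add, ← pow_mul, ← pow_mul, hms, Nat.mul_comm]
    have e2 : A ^ (m - l) * A ^ (l - s) ≤ A ^ (m - l) * C ^ (m - l) :=
      mul_le_mul_of_nonneg_left step1 (by positivity)
    have e3 : A ^ (m - l) * C ^ (m - l) = (B * D) ^ (m - l) := by
      rw [← mul_pow, mul_comm, hsplit]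
    have e4 : ((B * D) ^ (m - l)) ^ (r - s) = (B ^ (m - l)) ^ (r - s) * (D ^ (r - s)) ^ (m - l) := by
      rw [mul_pow, ← pow_mul, ← pow_mul, Nat.mul_comm (r - s) (m - l)]
      rw [mul_pow, ← pow_mul, ← pow_mul]
    have e5 : (D ^ (r - s)) ^ (m - l) ≤ (B ^ (m - r)) ^ (m - l) :=
      pow_le_pow_left₀ (by positivity) step2 _
    calc (A ^ (r - s)) ^ (m - s)
        = (A ^ (m - l) * A ^ (l - s)) ^ (r - s) := e1
      _ ≤ (A ^ (m - l) * C ^ (m - l)) ^ (r - s) :=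
          pow_le_pow_left₀ (by positivity) e2 _
      _ = ((B * D) ^ (m - l)) ^ (r - s) := by rw [e3]
      _ = (B ^ (m - l)) ^ (r - s) * (D ^ (r - s)) ^ (m - l) := e4
      _ ≤ (B ^ (m - l)) ^ (r - s) * (B ^ (m - r)) ^ (m - l) :=
          mul_le_mul_of_nonneg_left e5 (by positivity)
      _ = (B ^ (m - l)) ^ (m - s) := by
          rw [← pow_mul, ← pow_mul, ← pow_add, ← pow_mul]
          congr 1
          have h1 : (m - l) * (r - s) + (m - r) * (m - l) = (m - l) * (m - s) := by
            have : r - s + (m - r) = m - s := by omega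
            calc (m - l) * (r - s) + (m - r) * (m - l)
                = (m - l) * ((r - s) + (m - r)) := by ring
              _ = (m - l) * (m - s) := by rw [this]
          omega
  exact le_of_pow_le_pow_left₀ (by omega) (by positivity) key

noncomputable def pfun (n : ℕ) (lam : Fin n → ℝ) (j : ℕ) : ℝ :=
  esym n j lam / (n.choose j : ℝ)

noncomputable def qfun (n : ℕ) (lam : Fin n → ℝ) (j : ℕ) : ℝ :=
  pfun n lam j / pfun n lam (j-1)

lemma esym_eq_esymm (n k : ℕ) (lam : Fin n → ℝ) :
    esym n k lam = (Finset.univ.val.map lam).esymm k :=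
  (Finset.esymm_map_val lam Finset.univ k).symm

lemma esym_zero (n : ℕ) (lam : Fin n → ℝ) : esym n 0 lam = 1 := by
  simp [esym]

/-- Generalized Newton–MacLaurin inequality. -/
theorem newton_maclaurin (n m l r s : ℕ) (hmn : m ≤ n)
    (hlm : l < m) (hsr : s < r) (hrm : r ≤ m) (hsl : s ≤ l)
    (lam : Fin n → ℝ)
    (hΓ : ∀ i : ℕ, 1 ≤ i → i ≤ m → 0 < esym n i lam) :
    ((esym n m lam / (n.choose m : ℝ)) / (esym n l lam / (n.choose l : ℝ)))
        ^ ((1 : ℝ) / ((m : ℝ) - (l : ℝ)))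
      ≤ ((esym n r lam / (n.choose r : ℝ)) / (esym n s lam / (n.choose s : ℝ)))
        ^ ((1 : ℝ) / ((r : ℝ) - (s : ℝ))) := by
  set p := pfun n lam with hp
  set q := qfun n lam with hq
  have ppos : ∀ j, j ≤ m → 0 < p j := by
    intro j hj
    have hcpos : (0:ℝ) < (n.choose j : ℝ) := by
      exact_mod_cast Nat.choose_pos (by omega)
    rcases Nat.eq_zero_or_pos j with rfl | hjpos
    · rw [hp, pfun, esym_zero]
      positivity
    · exact div_pos (hΓ j (by omega) hj) hcpos
  have pne : ∀ j, j ≤ m → p j ≠ 0 := fun j hj => (ppos j hj).ne'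
  -- Newton's inequality in p form
  have newton : ∀ k, 1 ≤ k → k + 1 ≤ m → p (k-1) * p (k+1) ≤ p k ^ 2 := by
    intro k hk1 hkm
    have hcard : Multiset.card (Finset.univ.val.map lam) = n := by
      rw [Multiset.card_map]
      simp
    have := newton_ineq n (Finset.univ.val.map lam) k hcard hk1 (by omega)
    rw [← esym_eq_esymm, ← esym_eq_esymm, ← esym_eq_esymm] at this
    exact this
  have qpos : ∀ j, 1 ≤ j → j ≤ m → 0 < q j := by
    intro j hj1 hjm
    exact div_pos (ppos j hjm) (ppos (j-1) (by omega))
  have qstep : ∀ j, 1 ≤ j → j + 1 ≤ m → q (j+1) ≤ q j := by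
    intro j hj1 hjm
    have h1 : q (j+1) = p (j+1) / p j := by
      rw [hq, qfun, Nat.add_sub_cancel]
    have h2 : q j = p j / p (j-1) := by rw [hq, qfun]
    rw [h1, h2, div_le_div_iff₀ (ppos j (by omega)) (ppos (j-1) (by omega))]
    have := newton j hj1 hjm
    nlinarith [this]
  have qmono : ∀ i j, 1 ≤ i → i ≤ j → j ≤ m → q j ≤ q i := by
    intro i j hi1 hij hjm
    induction j, hij using Nat.le_induction with
    | base => rfl
    | succ j hij ih =>
      exact (qstep j (by omega) hjm).trans (ih (by omega))
  -- telescoping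
  have tel : ∀ a b : ℕ, a ≤ b → b ≤ m → p b = p a * ∏ j ∈ Finset.Ioc a b, q j := by
    intro a b hab
    induction b, hab using Nat.le_induction with
    | base => intro _; simp
    | succ b hab ih =>
      intro hbm
      rw [Finset.prod_Ioc_succ_top (by omega), ← mul_assoc, ← ih (by omega)]
      have h1 : q (b+1) = p (b+1) / p b := by
        rw [hq, qfun, Nat.add_sub_cancel]
      rw [h1, mul_div_cancel₀ _ (pne b (by omega))]
  have hAeq : p m / p l = ∏ j ∈ Finset.Ioc l m, q j := by
    rw [tel l m (by omega) le_rfl, mul_comm, mul_div_assoc,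
      div_self (pne l (by omega)), mul_one]
  have hBeq : p r / p s = ∏ j ∈ Finset.Ioc s r, q j := by
    rw [tel s r (by omega) hrm, mul_comm, mul_div_assoc,
      div_self (pne s (by omega)), mul_one]
  have hA : 0 < p m / p l := div_pos (ppos m le_rfl) (ppos l (by omega))
  have hB : 0 < p r / p s := div_pos (ppos r hrm) (ppos s (by omega))
  have key : (p m / p l) ^ (r - s) ≤ (p r / p s) ^ (m - l) := by
    rw [hAeq, hBeq]
    exact gm_mono q m l r s qpos qmono hlm hsr hrm hsl
  -- rpow manipulation
  show (p m / p l) ^ ((1 : ℝ) / ((m : ℝ) - (l : ℝ)))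
      ≤ (p r / p s) ^ ((1 : ℝ) / ((r : ℝ) - (s : ℝ)))
  set a : ℝ := (m : ℝ) - (l : ℝ) with ha'
  set b : ℝ := (r : ℝ) - (s : ℝ) with hb'
  have ha : 0 < a := by
    rw [ha']
    have : (l:ℝ) < m := by exact_mod_cast hlm
    linarith
  have hb : 0 < b := by
    rw [hb']
    have : (s:ℝ) < r := by exact_mod_cast hsr
    linarith
  have hcast1 : ((m - l : ℕ) : ℝ) = a := by
    rw [ha', Nat.cast_sub (by omega)]
  have hcast2 : ((r - s : ℕ) : ℝ) = b := by
    rw [hb', Nat.cast_sub (by omega)]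
  have h1 : (p m / p l) ^ ((1:ℝ)/a) = ((p m / p l) ^ (r - s)) ^ ((1:ℝ)/(b*a)) := by
    rw [← Real.rpow_natCast (p m / p l) (r - s), ← Real.rpow_mul hA.le, hcast2]
    congr 1
    field_simp
  have h2 : (p r / p s) ^ ((1:ℝ)/b) = ((p r / p s) ^ (m - l)) ^ ((1:ℝ)/(b*a)) := by
    rw [← Real.rpow_natCast (p r / p s) (m - l), ← Real.rpow_mul hB.le, hcast1]
    congr 1
    field_simp
  have h3 : ((p m / p l) ^ (r - s)) ^ ((1:ℝ)/(b*a)) ≤ ((p r / p s) ^ (m - l)) ^ ((1:ℝ)/(b*a)) :=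
    Real.rpow_le_rpow (by positivity) key (by positivity)
  rw [h1, h2]
  exact h3

end Aux2
end

section
/- Quotient ratio bound used in Step 3 of the C² estimate: if λ₁ ≥ λ₂ ≥ ⋯ ≥ λₙ ≥ 0 and λ_{l+1} ≤ δ'·λ₁ for some δ' > 0, then the deleted term satisfies σ_l(λ|1)/σ_l(λ) ≤ C·λ_{l+1}/λ₁ for a constant C = C(n,l), provided λ₁⋯λ_l > 0; consequently λ₁·σ_l^{11}/σ_l = 1 − σ_l(λ|1)/σ_l(λ) ≥ 1 − C·δ'. -/
open Finset

private lemma strictMono_succ_le {l n : ℕ} (f : Fin l → Fin n) (hf : StrictMono f)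
    (h1 : ∀ k, 1 ≤ (f k : ℕ)) : ∀ k : Fin l, (k : ℕ) + 1 ≤ (f k : ℕ) := by
  intro ⟨k, hk⟩
  induction k with
  | zero => exact h1 _
  | succ k ih =>
    have h1' : k < l := Nat.lt_of_succ_lt hk
    have hlt : f ⟨k, h1'⟩ < f ⟨k + 1, hk⟩ := hf (by simp [Fin.lt_def])
    have := ih h1'
    simp only [Fin.val_mk] at *
    rw [Fin.lt_def] at hlt
    omega


/-- Quotient ratio bound: if λ₁ ≥ ⋯ ≥ λₙ ≥ 0, λ₁⋯λ_l > 0 and λ_{l+1} ≤ δ'·λ₁, then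
σ_l(λ|1)/σ_l(λ) ≤ C·λ_{l+1}/λ₁ with C = C(n,l), and consequently
λ₁·σ_{l-1}(λ|1)/σ_l(λ) = 1 − σ_l(λ|1)/σ_l(λ) ≥ 1 − C·δ'. -/
theorem deleted_ratio_bound (n l : ℕ) (hl : 0 < l) (hln : l < n)
    (δ' : ℝ) (hδ' : 0 < δ') (lam : Fin n → ℝ)
    (hnn : ∀ i, 0 ≤ lam i)
    (hmono : ∀ i j : Fin n, i ≤ j → lam j ≤ lam i)
    (hprod : 0 < ∏ i ∈ Finset.univ.filter (fun i : Fin n => (i : ℕ) < l), lam i)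
    (hgap : lam ⟨l, hln⟩ ≤ δ' * lam ⟨0, Nat.lt_of_lt_of_le hl hln.le⟩) :
    esymDel n l lam ⟨0, Nat.lt_of_lt_of_le hl hln.le⟩ / esym n l lam ≤
        ((n - 1).choose l : ℝ) * lam ⟨l, hln⟩ / lam ⟨0, Nat.lt_of_lt_of_le hl hln.le⟩ ∧
    1 - ((n - 1).choose l : ℝ) * δ' ≤
      lam ⟨0, Nat.lt_of_lt_of_le hl hln.le⟩ *
        esymDel n (l - 1) lam ⟨0, Nat.lt_of_lt_of_le hl hln.le⟩ / esym n l lam := by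
  have h0n : 0 < n := Nat.lt_of_lt_of_le hl hln.le
  set i0 : Fin n := ⟨0, h0n⟩ with hi0
  set il : Fin n := ⟨l, hln⟩ with hil
  set C : ℝ := ((n - 1).choose l : ℝ) with hC
  have hC0 : 0 ≤ C := Nat.cast_nonneg _
  set s0 : Finset (Fin n) := Finset.univ.filter (fun i : Fin n => (i : ℕ) < l) with hs0
  -- s0 as an image of Fin l
  have hs0map : s0 = Finset.map (Fin.castLEEmb hln.le) Finset.univ := by
    ext x
    simp [hs0, Fin.castLEEmb, Fin.castLE]
    constructor
    · intro hx; exact ⟨⟨x, hx⟩, rfl⟩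
    · rintro ⟨y, rfl⟩; exact y.isLt
  have hs0card : s0.card = l := by rw [hs0map]; simp
  set P0 : ℝ := ∏ i ∈ s0, lam i with hP0
  have hP0pos : 0 < P0 := hprod
  have hP0fin : P0 = ∏ k : Fin l, lam (Fin.castLE hln.le k) := by
    rw [hP0, hs0map, Finset.prod_map]; rfl
  set P1 : ℝ := ∏ k : Fin l, lam ⟨(k : ℕ) + 1, by omega⟩ with hP1
  have hP1nn : 0 ≤ P1 := Finset.prod_nonneg fun _ _ => hnn _
  -- lam i0 > 0
  have hlam0 : 0 < lam i0 := by
    rcases (hnn i0).lt_or_eq with h | h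
    · exact h
    · exfalso
      have : P0 = 0 := Finset.prod_eq_zero (by simp [hs0, hi0, hl]) h.symm
      rw [this] at hP0pos; exact lt_irrefl _ hP0pos
  have hlaml : 0 ≤ lam il := hnn il
  -- key product identity: lam i0 * P1 = lam il * P0
  have hprodid : lam i0 * P1 = lam il * P0 := by
    have hA : ∀ k : Fin (l + 1), ((k : ℕ)) < n := fun k => by omega
    have e1 : (∏ k : Fin (l + 1), lam ⟨(k : ℕ), hA k⟩) = lam i0 * P1 := by
      rw [Fin.prod_univ_succ]; rfl
    have e2 : (∏ k : Fin (l + 1), lam ⟨(k : ℕ), hA k⟩) = lam il * P0 := by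
      rw [Fin.prod_univ_castSucc, mul_comm, hP0fin]; rfl
    rw [← e1, e2]
  -- esym lower bound
  have hesym_ge : P0 ≤ esym n l lam := by
    apply Finset.single_le_sum (f := fun t => ∏ i ∈ t, lam i)
      (fun t _ => Finset.prod_nonneg fun _ _ => hnn _)
    rw [Finset.mem_powersetCard]
    exact ⟨Finset.subset_univ _, hs0card⟩
  have hesym_pos : 0 < esym n l lam := lt_of_lt_of_le hP0pos hesym_ge
  -- monomial bound
  have hmonomial : ∀ t ∈ (Finset.univ.erase i0).powersetCard l, (∏ j ∈ t, lam j) ≤ P1 := by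
    intro t ht
    rw [Finset.mem_powersetCard] at ht
    obtain ⟨hts, htc⟩ := ht
    set f := t.orderEmbOfFin htc with hf
    have htmap : t = Finset.map f.toEmbedding Finset.univ := by
      ext x
      simp only [Finset.mem_map, Finset.mem_univ, true_and]
      constructor
      · intro hx
        have : x ∈ Set.range f := by rw [Finset.range_orderEmbOfFin]; exact hx
        obtain ⟨k, hk⟩ := this; exact ⟨k, hk⟩
      · rintro ⟨k, rfl⟩; exact Finset.orderEmbOfFin_mem t htc k
    have hfekey : ∀ k : Fin l, (k : ℕ) + 1 ≤ (f k : ℕ) := by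
      apply strictMono_succ_le f f.strictMono
      intro k
      have : f k ∈ t := Finset.orderEmbOfFin_mem t htc k
      have hne : f k ≠ i0 := Finset.ne_of_mem_erase (hts this)
      have h2 := Fin.val_ne_iff.mpr hne
      have h3 : (i0 : ℕ) = 0 := rfl
      omega
    rw [htmap, Finset.prod_map]
    apply Finset.prod_le_prod (fun _ _ => hnn _)
    intro k _
    exact hmono ⟨(k : ℕ) + 1, by omega⟩ (f k) (by rw [Fin.le_def]; exact hfekey k)
  -- esymDel upper bound
  have hdel_le : esymDel n l lam i0 ≤ C * P1 := by
    have hcard : ((Finset.univ.erase i0).powersetCard l).card = (n - 1).choose l := by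
      rw [Finset.card_powersetCard, Finset.card_erase_of_mem (Finset.mem_univ _)]
      simp
    calc esymDel n l lam i0 ≤ ((Finset.univ.erase i0).powersetCard l).card • P1 :=
          Finset.sum_le_card_nsmul _ _ _ hmonomial
      _ = C * P1 := by rw [hcard, nsmul_eq_mul]
  have hdel_nn : 0 ≤ esymDel n l lam i0 :=
    Finset.sum_nonneg fun t _ => Finset.prod_nonneg fun _ _ => hnn _
  -- first claim
  have claim1 : esymDel n l lam i0 / esym n l lam ≤ C * lam il / lam i0 := by
    rw [div_le_div_iff₀ hesym_pos hlam0]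
    calc esymDel n l lam i0 * lam i0 ≤ (C * P1) * lam i0 := by
          exact mul_le_mul_of_nonneg_right hdel_le hlam0.le
      _ = C * (lam il * P0) := by rw [← hprodid]; ring
      _ ≤ C * lam il * esym n l lam := by
          rw [mul_assoc]
          exact mul_le_mul_of_nonneg_left
            (mul_le_mul_of_nonneg_left hesym_ge hlaml) hC0
  refine ⟨claim1, ?_⟩
  -- decomposition identity
  have hid : esym n l lam = lam i0 * esymDel n (l - 1) lam i0 + esymDel n l lam i0 := by
    have huniv : (Finset.univ : Finset (Fin n)) = insert i0 (Finset.univ.erase i0) :=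
      (Finset.insert_erase (Finset.mem_univ i0)).symm
    have hlsucc : l = (l - 1) + 1 := (Nat.succ_pred_eq_of_pos hl).symm
    rw [esym]
    conv_lhs => rw [huniv, hlsucc,
      Finset.powersetCard_succ_insert (Finset.notMem_erase i0 _)]
    rw [Finset.sum_union, Finset.sum_image, add_comm]
    · congr 1
      · rw [esymDel, Finset.mul_sum]
        apply Finset.sum_congr rfl
        intro t ht
        rw [Finset.mem_powersetCard] at ht
        have hi0t : i0 ∉ t := fun h => Finset.notMem_erase i0 _ (ht.1 h)
        rw [Finset.prod_insert hi0t]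
      · have hll : (l - 1).succ = l := Nat.succ_pred_eq_of_pos hl
        rw [hll, esymDel]
    · intro a ha b hb hab
      rw [Finset.mem_coe, Finset.mem_powersetCard] at ha hb
      have ha0 : i0 ∉ a := fun h => Finset.notMem_erase i0 _ (ha.1 h)
      have hb0 : i0 ∉ b := fun h => Finset.notMem_erase i0 _ (hb.1 h)
      rw [← Finset.erase_insert ha0, ← Finset.erase_insert hb0, hab]
    · rw [Finset.disjoint_left]
      intro t ht htim
      rw [Finset.mem_powersetCard] at ht
      obtain ⟨u, hu, rfl⟩ := Finset.mem_image.mp htim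
      exact Finset.notMem_erase i0 _ (ht.1 (Finset.mem_insert_self i0 u))
  -- conclude
  have hratio : lam i0 * esymDel n (l - 1) lam i0 / esym n l lam
      = 1 - esymDel n l lam i0 / esym n l lam := by
    field_simp
    linarith [hid]
  rw [hratio]
  have hstep : C * lam il / lam i0 ≤ C * δ' := by
    rw [div_le_iff₀ hlam0]
    calc C * lam il ≤ C * (δ' * lam i0) := mul_le_mul_of_nonneg_left hgap hC0
      _ = C * δ' * lam i0 := by ring
  linarith [claim1]
end
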